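/- For all positive integers u and v, a number z = x + yi ∈ D₀ is an orphan for the pair (L_u, R_v) — i.e., there is no w ∈ D₀ with L_u(w) = z or R_v(w) = z — if and only if u(x² + y²) ≥ x and x ≤ v. Hence the fundamental domain is Ω(L_u,R_v) = {x + yi ∈ D₀ : u(x²+y²) ≥ x and x ≤ v}. -/

import Mathlib

/-- The open first quadrant of "positive" complex numbers. -/
def D0 : Set ℂ := {z : ℂ | 0 < z.re ∧ 0 < z.im}

/-- z = x + yi ∈ D₀ is an orphan for the pair (L_u, R_v) — it has no parent,
i.e. no w ∈ D₀ with L_u(w) = z or R_v(w) = z — if and only if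
u(x² + y²) ≥ x and x ≤ v.  Hence the fundamental domain is
Ω(L_u,R_v) = {x + yi ∈ D₀ : u(x²+y²) ≥ x and x ≤ v}. -/
theorem orphan_iff (u v : ℕ) (hu : 0 < u) (hv : 0 < v) (z : ℂ) (hz : z ∈ D0) :
    (¬ ∃ w ∈ D0, w / ((u : ℂ) * w + 1) = z ∨ w + (v : ℂ) = z) ↔
      (z.re ≤ (u : ℝ) * (z.re ^ 2 + z.im ^ 2) ∧ z.re ≤ (v : ℝ)) := by
  obtain ⟨hx, hy⟩ := hz
  have hu' : (0:ℝ) < u := by exact_mod_cast hu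
  have key : (∃ w ∈ D0, w / ((u : ℂ) * w + 1) = z ∨ w + (v : ℂ) = z) ↔
      ((u : ℝ) * (z.re ^ 2 + z.im ^ 2) < z.re ∨ (v : ℝ) < z.re) := by
    constructor
    · rintro ⟨w, ⟨ha, hb⟩, heq | heq⟩
      · left
        have hd : ((u : ℂ) * w + 1) ≠ 0 := by
          intro h
          have := congrArg Complex.re h
          simp [Complex.add_re, Complex.mul_re] at this
          nlinarith
        have hw : w = z * ((u : ℂ) * w + 1) := by
          field_simp at heq
          rw [← mul_comm (u : ℂ) w, div_eq_iff hd] at heq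
          linear_combination heq
        have h1 := congrArg Complex.re hw
        have h2 := congrArg Complex.im hw
        simp [Complex.mul_re, Complex.mul_im] at h1 h2
        nlinarith [mul_pos ha hb, mul_pos hx hy, sq_nonneg z.re, sq_nonneg z.im,
          mul_pos hx ha, mul_pos hy hb]
      · right
        have := congrArg Complex.re heq
        simp at this
        linarith
    · rintro (h | h)
      · set d : ℂ := 1 - (u : ℂ) * z with hdd
        have hdre : d.re = 1 - u * z.re := by simp [hdd]
        have hdim : d.im = -(u * z.im) := by simp [hdd]
        have hd : d ≠ 0 := by
          intro h0
          rw [Complex.ext_iff] at h0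
          have := h0.2
          rw [hdim] at this
          simp at this
          rcases this with h1 | h1
          · exact absurd h1 hu.ne'
          · linarith
        refine ⟨z / d, ⟨?_, ?_⟩, Or.inl ?_⟩
        · rw [Complex.div_re, hdre, hdim, ← add_div]
          have hN : 0 < Complex.normSq d := Complex.normSq_pos.mpr hd
          apply div_pos _ hN
          nlinarith
        · rw [Complex.div_im, hdre, hdim, div_sub_div_same]
          have hN : 0 < Complex.normSq d := Complex.normSq_pos.mpr hd
          apply div_pos _ hN
          nlinarith
        · have hden : (u : ℂ) * (z / d) + 1 = 1 / d := by
            field_simp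
            ring
          rw [hden]
          field_simp
      · refine ⟨z - (v : ℂ), ⟨?_, ?_⟩, Or.inr (by ring)⟩
        · simp; linarith
        · simpa using hy
  rw [key, not_or, not_lt, not_lt]
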